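/- Let E(f) = {v ∈ V : ∃ a ∈ ℝ, ∀ x, f(x+v) = f(x) + a} for a convex function f : V → ℝ ∪ {+∞} on a real vector space V. Then E(f) is a linear subspace of V. -/

import Mathlib

/-- The epigraph of an `EReal`-valued function. -/
def epigraph {V : Type*} (f : V → EReal) : Set (V × ℝ) :=
  {p | f p.1 ≤ (p.2 : EReal)}

private lemma ereal_shift {x y : EReal} {a : ℝ} (hy : y ≠ ⊥) (h : x = y + (a : EReal)) :
    y = x + ((-a : ℝ) : EReal) := by
  induction y with
  | bot => exact absurd rfl hy
  | coe r =>
      subst h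
      norm_cast
      ring
  | top =>
      subst h
      simp

private lemma mem_neg' {V : Type*} [AddCommGroup V] [Module ℝ V] (f : V → EReal)
    (hbot : ∀ x, f x ≠ ⊥) {v : V} {a : ℝ}
    (hv : ∀ x, f (x + v) = f x + (a : EReal)) :
    ∀ x, f (x + -v) = f x + ((-a : ℝ) : EReal) := by
  intro x
  have h := hv (x + -v)
  rw [neg_add_cancel_right] at h
  exact ereal_shift (hbot _) h

private lemma unit_smul_le {V : Type*} [AddCommGroup V] [Module ℝ V] (f : V → EReal)
    (hbot : ∀ x, f x ≠ ⊥) (hconv : Convex ℝ (epigraph f)) {v : V} {a : ℝ}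
    (hv : ∀ x, f (x + v) = f x + (a : EReal)) {t : ℝ} (ht0 : 0 ≤ t) (ht1 : t ≤ 1) :
    ∀ x, f (x + t • v) ≤ f x + ((t * a : ℝ) : EReal) := by
  intro x
  cases hx : f x with
  | bot => exact absurd hx (hbot x)
  | top => rw [EReal.top_add_coe]; exact le_top
  | coe r =>
      have h1 : (x, r) ∈ epigraph f := by simp [epigraph, hx]
      have h2 : (x + v, r + a) ∈ epigraph f := by
        simp only [epigraph, Set.mem_setOf_eq, hv x, hx]
        norm_cast
      have hmem := hconv h1 h2 (by linarith : (0:ℝ) ≤ 1 - t) ht0 (by ring)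
      have hpt : (1 - t) • ((x, r) : V × ℝ) + t • ((x + v, r + a) : V × ℝ)
          = ((x + t • v, r + t * a) : V × ℝ) := by
        apply Prod.ext
        · show (1 - t) • x + t • (x + v) = x + t • v
          rw [sub_smul, one_smul, smul_add]
          abel
        · show (1 - t) * r + t * (r + a) = r + t * a
          ring
      rw [hpt] at hmem
      have : f (x + t • v) ≤ ((r + t * a : ℝ) : EReal) := hmem
      calc f (x + t • v) ≤ ((r + t * a : ℝ) : EReal) := this
        _ = (r : EReal) + ((t * a : ℝ) : EReal) := by norm_cast

private lemma unit_smul_eq {V : Type*} [AddCommGroup V] [Module ℝ V] (f : V → EReal)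
    (hbot : ∀ x, f x ≠ ⊥) (hconv : Convex ℝ (epigraph f)) {v : V} {a : ℝ}
    (hv : ∀ x, f (x + v) = f x + (a : EReal)) {t : ℝ} (ht0 : 0 ≤ t) (ht1 : t ≤ 1) :
    ∀ x, f (x + t • v) = f x + ((t * a : ℝ) : EReal) := by
  intro x
  have hle := unit_smul_le f hbot hconv hv ht0 ht1 x
  have hge' := unit_smul_le f hbot hconv (mem_neg' f hbot hv) ht0 ht1 (x + t • v)
  rw [smul_neg, add_neg_cancel_right] at hge'
  -- hge' : f x ≤ f (x + t • v) + ↑(t * -a)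
  have hge : f x + ((t * a : ℝ) : EReal) ≤ f (x + t • v) := by
    have := add_le_add_left hge' ((t * a : ℝ) : EReal)
    calc f x + ((t * a : ℝ) : EReal)
        ≤ f (x + t • v) + ((t * -a : ℝ) : EReal) + ((t * a : ℝ) : EReal) := this
      _ = f (x + t • v) + (((t * -a : ℝ) : EReal) + ((t * a : ℝ) : EReal)) := by
          rw [add_assoc]
      _ = f (x + t • v) + (((t * -a) + (t * a) : ℝ) : EReal) := by norm_cast
      _ = f (x + t • v) := by norm_num
  exact le_antisymm hle hge

private lemma nsmul_mem' {V : Type*} [AddCommGroup V] [Module ℝ V] (f : V → EReal)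
    {v : V} {a : ℝ} (hv : ∀ x, f (x + v) = f x + (a : EReal)) (n : ℕ) :
    ∀ x, f (x + (n : ℝ) • v) = f x + ((n * a : ℝ) : EReal) := by
  induction n with
  | zero => intro x; simp
  | succ n ih =>
      intro x
      have : x + ((n + 1 : ℕ) : ℝ) • v = (x + (n : ℝ) • v) + v := by
        push_cast
        rw [add_smul, one_smul]
        abel
      rw [this, hv, ih, add_assoc]
      congr 1
      norm_cast
      push_cast
      ring

private lemma smul_mem_aux {V : Type*} [AddCommGroup V] [Module ℝ V] (f : V → EReal)
    (hbot : ∀ x, f x ≠ ⊥) (hconv : Convex ℝ (epigraph f)) {v : V} {a : ℝ}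
    (hv : ∀ x, f (x + v) = f x + (a : EReal)) {c : ℝ} (hc : 0 ≤ c) :
    ∀ x, f (x + c • v) = f x + ((c * a : ℝ) : EReal) := by
  set n : ℕ := ⌈c⌉₊ + 1 with hn
  have hnpos : (0 : ℝ) < (n : ℝ) := by positivity
  have hcn : c ≤ (n : ℝ) := le_trans (Nat.le_ceil c) (by rw [hn]; push_cast; linarith)
  set t : ℝ := c / n with htdef
  have ht0 : 0 ≤ t := div_nonneg hc hnpos.le
  have ht1 : t ≤ 1 := (div_le_one hnpos).mpr hcn
  have key := unit_smul_eq f hbot hconv (nsmul_mem' f hv n) ht0 ht1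
  intro x
  have h1 : t • ((n : ℝ) • v) = c • v := by
    rw [smul_smul, htdef, div_mul_cancel₀ c hnpos.ne']
  have h2 : t * ((n : ℝ) * a) = c * a := by
    rw [htdef]
    field_simp
  rw [← h1, key x, h2]

/-- for a convex function `f : V → ℝ ∪ {+∞}`, the set
`E(f) = {v | ∃ a ∈ ℝ, ∀ x, f(x+v) = f(x) + a}` is a linear subspace of `V`. -/
theorem E_isLinearSubspace
    {V : Type*} [AddCommGroup V] [Module ℝ V]
    (f : V → EReal) (hbot : ∀ x, f x ≠ ⊥) (hconv : Convex ℝ (epigraph f)) :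
    ∃ S : Submodule ℝ V,
      (S : Set V) = {v : V | ∃ a : ℝ, ∀ x : V, f (x + v) = f x + (a : EReal)} := by
  refine ⟨{
    carrier := {v : V | ∃ a : ℝ, ∀ x : V, f (x + v) = f x + (a : EReal)}
    zero_mem' := ⟨0, by intro x; simp⟩
    add_mem' := ?_
    smul_mem' := ?_ }, rfl⟩
  · rintro u w ⟨a, ha⟩ ⟨b, hb⟩
    refine ⟨a + b, fun x => ?_⟩
    have : x + (u + w) = (x + u) + w := by abel
    rw [this, hb, ha, add_assoc]
    norm_cast
  · rintro c v ⟨a, ha⟩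
    rcases le_or_gt 0 c with hc | hc
    · exact ⟨c * a, smul_mem_aux f hbot hconv ha hc⟩
    · refine ⟨c * a, fun x => ?_⟩
      have h := smul_mem_aux f hbot hconv (mem_neg' f hbot ha)
        (le_of_lt (neg_pos.mpr hc)) x
      rw [smul_neg, ← neg_smul, neg_neg] at h
      rw [h]
      congr 1
      norm_cast
      ring
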